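/- Let 0 < q < 1 be real and let α, β, γ, δ ∈ ℂ be nonzero. Define σ(α,β,γ,δ) = (α, β, βδ, γ/β) and τ(α,β,γ,δ) = (γ, αβ/γ, α, γδ/α). Then for every integer x such that 1−γδq^{2x} ≠ 0, 1−γδq^{2x+1} ≠ 0 and 1−γδq^{2x+2} ≠ 0, the coefficients B(x) and D(x) are invariant under the substitutions σ and τ: B and D computed at σ(α,β,γ,δ) and at τ(α,β,γ,δ) equal B and D computed at (α,β,γ,δ). Moreover, on the set {(α,β,γ,δ) ∈ ℂ⁴ : αβγδ ≠ 0} one has σ∘σ = id, τ∘τ = id and (σ∘τ)∘(σ∘τ)∘(σ∘τ) = id. -/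

import Mathlib

noncomputable section

/-- The general q-Racah coefficient
`B(x) = (1-αq^{x+1})(1-βδq^{x+1})(1-γq^{x+1})(1-γδq^{x+1}) /
  ((1-γδq^{2x+1})(1-γδq^{2x+2}))`. -/
def qRacB (q : ℝ) (α β γ δ : ℂ) (x : ℤ) : ℂ :=
  (1 - α * (q : ℂ) ^ (x + 1)) * (1 - β * δ * (q : ℂ) ^ (x + 1)) *
      (1 - γ * (q : ℂ) ^ (x + 1)) * (1 - γ * δ * (q : ℂ) ^ (x + 1)) /
    ((1 - γ * δ * (q : ℂ) ^ (2 * x + 1)) * (1 - γ * δ * (q : ℂ) ^ (2 * x + 2)))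

/-- The general q-Racah coefficient
`D(x) = q(1-q^x)(α-γδq^x)(β-γq^x)(1-δq^x) / ((1-γδq^{2x})(1-γδq^{2x+1}))`. -/
def qRacD (q : ℝ) (α β γ δ : ℂ) (x : ℤ) : ℂ :=
  (q : ℂ) * (1 - (q : ℂ) ^ x) * (α - γ * δ * (q : ℂ) ^ x) * (β - γ * (q : ℂ) ^ x) *
      (1 - δ * (q : ℂ) ^ x) /
    ((1 - γ * δ * (q : ℂ) ^ (2 * x)) * (1 - γ * δ * (q : ℂ) ^ (2 * x + 1)))

/-- The substitution `σ(α,β,γ,δ) = (α, β, βδ, γ/β)`. -/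
def qRacSigma (p : ℂ × ℂ × ℂ × ℂ) : ℂ × ℂ × ℂ × ℂ :=
  (p.1, p.2.1, p.2.1 * p.2.2.2, p.2.2.1 / p.2.1)

/-- The substitution `τ(α,β,γ,δ) = (γ, αβ/γ, α, γδ/α)`. -/
def qRacTau (p : ℂ × ℂ × ℂ × ℂ) : ℂ × ℂ × ℂ × ℂ :=
  (p.2.2.1, p.1 * p.2.1 / p.2.2.1, p.1, p.2.2.1 * p.2.2.2 / p.1)

/-- The q-Racah coefficients `B` and `D` are invariant under the substitutions `σ` and `τ`;
moreover, on nonzero parameters, `σ² = τ² = (στ)³ = id` (so that `σ` and `τ` generate a group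
isomorphic to the symmetric group on three objects). -/
theorem qRacah_symmetries (q : ℝ) (hq0 : 0 < q) (hq1 : q < 1) (α β γ δ : ℂ)
    (hα : α ≠ 0) (hβ : β ≠ 0) (hγ : γ ≠ 0) (hδ : δ ≠ 0) :
    (∀ x : ℤ,
      1 - γ * δ * (q : ℂ) ^ (2 * x) ≠ 0 →
      1 - γ * δ * (q : ℂ) ^ (2 * x + 1) ≠ 0 →
      1 - γ * δ * (q : ℂ) ^ (2 * x + 2) ≠ 0 →
        qRacB q α β (β * δ) (γ / β) x = qRacB q α β γ δ x ∧
        qRacD q α β (β * δ) (γ / β) x = qRacD q α β γ δ x ∧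
        qRacB q γ (α * β / γ) α (γ * δ / α) x = qRacB q α β γ δ x ∧
        qRacD q γ (α * β / γ) α (γ * δ / α) x = qRacD q α β γ δ x) ∧
    qRacSigma (qRacSigma (α, β, γ, δ)) = (α, β, γ, δ) ∧
    qRacTau (qRacTau (α, β, γ, δ)) = (α, β, γ, δ) ∧
    qRacSigma (qRacTau (qRacSigma (qRacTau (qRacSigma (qRacTau (α, β, γ, δ)))))) =
      (α, β, γ, δ) := by
  have hbg : β * (γ / β) = γ := by field_simp
  have hbd : β * δ * (γ / β) = γ * δ := by field_simp
  have had : α * (γ * δ / α) = γ * δ := by field_simp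
  have habgd : α * β / γ * (γ * δ / α) = β * δ := by field_simp
  refine ⟨fun x h0 h1 h2 => ?_, ?_, ?_, ?_⟩
  · refine ⟨?_, ?_, ?_, ?_⟩
    · unfold qRacB; rw [hbg, hbd]; ring
    · unfold qRacD; rw [hbd]; congr 1; field_simp
    · unfold qRacB; rw [habgd, had]; ring
    · unfold qRacD; rw [had]; congr 1; field_simp
  · simp only [qRacSigma]
    rw [hbg, mul_div_cancel_left₀ δ hβ]
  · have h1 : γ * (α * β / γ) / α = β := by field_simp
    have h2 : α * (γ * δ / α) / γ = δ := by rw [had, mul_comm γ δ, mul_div_assoc,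
      div_self hγ, mul_one]
    simp only [qRacTau]
    rw [h1, h2]
  · have s1 : qRacSigma (qRacTau (α, β, γ, δ)) = (γ, α * β / γ, β * δ, γ / β) := by
      simp only [qRacSigma, qRacTau, Prod.mk.injEq]
      and_intros <;> first | trivial | exact habgd | (field_simp; try ring)
    have s2 : qRacSigma (qRacTau (γ, α * β / γ, β * δ, γ / β)) = (β * δ, α / δ, α, γ * δ / α) := by
      simp only [qRacSigma, qRacTau, Prod.mk.injEq]
      and_intros <;> first | trivial | (field_simp; try ring)
    have s3 : qRacSigma (qRacTau (β * δ, α / δ, α, γ * δ / α)) = (α, β, γ, δ) := by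
      simp only [qRacSigma, qRacTau, Prod.mk.injEq]
      and_intros <;> first | trivial | (field_simp; try ring)
    rw [s1, s2, s3]
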